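/- In every regular execution, every process changes its color infinitely often. (Equivalently, there is no regular execution in which some process keeps its color forever.) -/

import Mathlib

namespace BFS

inductive Status : Type
  | Idle | Working | Power | WeakE | StrongE
deriving DecidableEq

open Status

inductive Rule (V : Type) : Type
  | RC1 | RC2 | RC3 | RC4 | RC5 | RC6
  | R1 | R2
  | R3 (v : V)
  | R4 | R5 | R6 | R7
deriving DecidableEq

structure ProcState (V : Type) where
  P : Option V
  TS : Option V
  C : Bool
  S : Status
  ph : Bool

abbrev Config (V : Type) := V → ProcState V

variable {V : Type} [Fintype V] [DecidableEq V]

/-- Erroneous statuses. -/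
def Erroneous (s : Status) : Prop := s = WeakE ∨ s = StrongE

/-- The children of `u`: neighbors whose parent pointer designates `u`. -/
def Child (G : SimpleGraph V) (c : Config V) (u : V) : Set V :=
  {v | G.Adj u v ∧ (c v).P = some u}

/-- Closed neighborhood `N[u]`. -/
def ClosedNbr (G : SimpleGraph V) (u : V) : Set V := insert u (G.neighborSet u)

def StrongConflict (G : SimpleGraph V) (c : Config V) (u : V) : Prop :=
  (c u).S ≠ StrongE ∧
    ∃ w ∈ ClosedNbr G u, ∃ v ∈ ClosedNbr G u,
      (c v).C ≠ (c u).C ∧ (c w).S = Power ∧ (c v).S = Power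

def Conflict (G : SimpleGraph V) (r : V) (c : Config V) (u : V) : Prop :=
  (u ≠ r ∧ (c u).P ≠ none ∧
      ∃ v ∈ G.neighborSet u, (c v).S = Power ∧ (c v).C ≠ (c u).C) ∨
  (u = r ∧ (c u).S ≠ StrongE ∧
      ∃ v ∈ G.neighborSet u, (c v).S = Power ∧
        ((c v).C ≠ (c u).C ∨ Child G c u = ∅))

def Detached (G : SimpleGraph V) (r : V) (c : Config V) (u : V) : Prop :=
  Child G c u = ∅ ∧ ((c u).P = none ∨ u = r) ∧ (c u).S ≠ Power

def StrongEReady (G : SimpleGraph V) (c : Config V) (u : V) : Prop :=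
  (c u).S = StrongE ∧ ∀ v ∈ G.neighborSet u, (c v).S ≠ Power

def PowerFaulty (G : SimpleGraph V) (c : Config V) (u : V) : Prop :=
  (c u).S = Power ∧ ∃ v ∈ G.neighborSet u, (c v).S = StrongE

def Faulty (G : SimpleGraph V) (r : V) (c : Config V) (u : V) : Prop :=
  u ≠ r ∧ ∃ p, (c u).P = some p ∧ ¬ Erroneous (c p).S ∧
    (Erroneous (c u).S ∨
     (c u).C ≠ (c p).C ∨
     ((c p).S ≠ Working ∧ (c u).S ≠ Idle) ∨
     ((c p).S = (c u).S ∧ (c u).ph ≠ (c p).ph) ∨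
     ((c u).S = Power ∧ (c u).ph ≠ (c p).ph) ∨
     ((c p).S = Power ∧ (Child G c u ≠ ∅ ∨ (c u).ph ≠ (c p).ph)))

def IllegalRoot (G : SimpleGraph V) (r : V) (c : Config V) (u : V) : Prop :=
  u ≠ r ∧ (c u).P = none ∧ ¬ Detached G r c u

def IllegalLiveRoot (G : SimpleGraph V) (r : V) (c : Config V) (u : V) : Prop :=
  IllegalRoot G r c u ∧ ¬ Erroneous (c u).S

def IllegalChild (r : V) (c : Config V) (u : V) : Prop :=
  u ≠ r ∧ ∃ p, (c u).P = some p ∧ Erroneous (c p).S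

def Isolated (G : SimpleGraph V) (c : Config V) (u : V) : Prop :=
  (c u).S = WeakE ∨ (c u).S = Working ∨ StrongEReady G c u

def Ok (G : SimpleGraph V) (r : V) (c : Config V) (u : V) : Prop :=
  ¬ StrongConflict G c u ∧ ¬ Conflict G r c u ∧ ¬ PowerFaulty G c u ∧
  ¬ Faulty G r c u ∧ ¬ IllegalRoot G r c u ∧ ¬ IllegalChild r c u

def QuietSubTree (G : SimpleGraph V) (c : Config V) (u : V) : Prop :=
  ∀ v ∈ Child G c u, (c v).S = Idle ∧ (c v).ph = (c u).ph

def EndFirstPhase (G : SimpleGraph V) (c : Config V) (u : V) : Prop :=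
  (c u).S = Power ∧ QuietSubTree G c u ∧ ∀ v ∈ G.neighborSet u, (c v).C = (c u).C

def EndPhase (G : SimpleGraph V) (c : Config V) (u : V) : Prop :=
  (c u).S = Working ∧ QuietSubTree G c u

def EndLastPhase (G : SimpleGraph V) (c : Config V) (u : V) : Prop :=
  Child G c u = ∅ ∧ (EndFirstPhase G c u ∨ EndPhase G c u)

def EndIntermediatePhase (G : SimpleGraph V) (c : Config V) (u : V) : Prop :=
  Child G c u ≠ ∅ ∧ (EndFirstPhase G c u ∨ EndPhase G c u)

def Connection (G : SimpleGraph V) (r : V) (c : Config V) (u v : V) : Prop :=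
  Detached G r c u ∧ (Isolated G c u ∨ (c u).S = Idle) ∧
  G.Adj u v ∧ (c v).C ≠ (c u).C ∧ (c v).S = Power

def NewPhase (G : SimpleGraph V) (c : Config V) (u : V) : Prop :=
  ∃ p, (c u).P = some p ∧ QuietSubTree G c u ∧ (c u).S = Idle ∧ (c u).ph ≠ (c p).ph

/-- Guards of the rules RC1–RC6, R1–R7 of the algorithm. -/
def Guard (G : SimpleGraph V) (r : V) : Rule V → Config V → V → Prop
  | .RC1, c, u => u = r ∧ ¬ Conflict G r c u ∧ PowerFaulty G c u ∧ QuietSubTree G c u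
  | .RC2, c, u => u = r ∧ Detached G r c u ∧ StrongEReady G c u
  | .RC3, c, u => u = r ∧ Conflict G r c u
  | .RC4, c, u => u ≠ r ∧ StrongConflict G c u
  | .RC5, c, u => u ≠ r ∧ ¬ StrongConflict G c u ∧
      (Conflict G r c u ∨ Faulty G r c u ∨ PowerFaulty G c u ∨
       IllegalLiveRoot G r c u ∨ IllegalChild r c u)
  | .RC6, c, u => u ≠ r ∧ Detached G r c u ∧ Isolated G c u ∧
      ∀ v ∈ G.neighborSet u, (c v).C = (c u).C ∨ (c v).S ≠ Power
  | .R1, c, u => u = r ∧ Ok G r c u ∧ EndLastPhase G c u ∧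
      ∀ v ∈ G.neighborSet u, (c v).S ≠ StrongE
  | .R2, c, u => u = r ∧ Ok G r c u ∧ EndIntermediatePhase G c u
  | .R3 v, c, u => u ≠ r ∧ Ok G r c u ∧ Connection G r c u v
  | .R4, c, u => u ≠ r ∧ Ok G r c u ∧ NewPhase G c u ∧ Child G c u ≠ ∅
  | .R5, c, u => u ≠ r ∧ Ok G r c u ∧ NewPhase G c u ∧ Child G c u = ∅ ∧
      ∀ v ∈ G.neighborSet u, (c v).S ≠ StrongE
  | .R6, c, u => u ≠ r ∧ Ok G r c u ∧ EndIntermediatePhase G c u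
  | .R7, c, u => u ≠ r ∧ Ok G r c u ∧ (c u).P ≠ none ∧ EndLastPhase G c u

/-- Phase of the parent of `u` (or `u`'s own phase if it has no parent). -/
def parentPh (c : Config V) (u : V) : Bool :=
  match (c u).P with
  | some p => (c p).ph
  | none => (c u).ph

/-- The action of each rule: the new local state of the executing process `u`. -/
def execRule (c : Config V) (u : V) : Rule V → ProcState V
  | .RC1 => { c u with S := Working }
  | .RC2 => { c u with S := Working }
  | .RC3 => { c u with S := StrongE }
  | .RC4 => { c u with S := StrongE, P := none }
  | .RC5 => { c u with S := WeakE, P := none }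
  | .RC6 => { c u with S := Idle }
  | .R1 => { c u with C := !(c u).C, S := Power }
  | .R2 => { c u with ph := !(c u).ph, S := Working }
  | .R3 v => { c u with C := (c v).C, ph := (c v).ph, S := Idle, P := some v, TS := some v }
  | .R4 => { c u with ph := parentPh c u, S := Working }
  | .R5 => { c u with ph := parentPh c u, S := Power }
  | .R6 => { c u with S := Idle }
  | .R7 => { c u with S := Idle, P := none }

/-- A computation step: a nonempty set of enabled processes each atomically
executes one enabled rule; all other processes keep their state. -/
def IsStep (G : SimpleGraph V) (r : V) (c1 : Config V)
    (act : V → Option (Rule V)) (c2 : Config V) : Prop :=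
  (∃ u ρ, act u = some ρ) ∧
  ∀ u, (act u = none → c2 u = c1 u) ∧
       ∀ ρ, act u = some ρ → Guard G r ρ c1 u ∧ c2 u = execRule c1 u ρ

def Step (G : SimpleGraph V) (r : V) (c1 c2 : Config V) : Prop :=
  ∃ act, IsStep G r c1 act c2

/-- A process is enabled if the guard of some rule holds at it. -/
def Enabled (G : SimpleGraph V) (r : V) (c : Config V) (u : V) : Prop :=
  ∃ ρ : Rule V, Guard G r ρ c u

/-- Well-formed configurations: pointers designate neighbors, and the root has
no parent and only uses the statuses Power, Working, StrongE. -/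
def WellFormed (G : SimpleGraph V) (r : V) (c : Config V) : Prop :=
  (∀ u v, (c u).P = some v → G.Adj u v) ∧
  (∀ u v, (c u).TS = some v → G.Adj u v) ∧
  (c r).P = none ∧ (c r).TS = none ∧
  ((c r).S = Power ∨ (c r).S = Working ∨ (c r).S = StrongE)

/-- `PowerParent u`: some descendant of `u` (possibly `u`) may take the `Power`
status by a series of R4/R5 moves. -/
inductive PowerParent (c : Config V) : V → Prop
  | base (u p : V) : (c u).P = some p → (c u).S = Idle → (c p).S = Working →
      (c u).ph ≠ (c p).ph → PowerParent c u
  | step (u p : V) : (c u).P = some p → PowerParent c p → (c u).S = Idle →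
      (c u).ph = (c p).ph → PowerParent c u

def Influential (c : Config V) (u : V) : Prop :=
  (c u).S = Power ∨ PowerParent c u

/-- `u` lies on a branch rooted at `r` all of whose members are non-faulty,
and the root is not StrongE. -/
inductive InLegalTree (G : SimpleGraph V) (r : V) (c : Config V) : V → Prop
  | root : (c r).S ≠ StrongE → InLegalTree G r c r
  | child (u p : V) : (c u).P = some p → InLegalTree G r c p →
      ¬ Faulty G r c u → InLegalTree G r c u

def InsideLegalTree (G : SimpleGraph V) (r : V) (c : Config V) (u : V) : Prop :=
  InLegalTree G r c u ∧ (c u).S ≠ Power ∧ Child G c u ≠ ∅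

def UnSafe (G : SimpleGraph V) (r : V) (c : Config V) (u : V) : Prop :=
  InsideLegalTree G r c u ∧
    ∃ v ∈ G.neighborSet u, (c v).C ≠ (c u).C ∧ Influential c v

def UnRegular (G : SimpleGraph V) (r : V) (c : Config V) (u : V) : Prop :=
  ¬ Detached G r c u ∧ ¬ InLegalTree G r c u

/-- Infinite executions of the algorithm (by Theorem `no deadlock` there is no
terminal configuration). -/
structure Execution (G : SimpleGraph V) (r : V) where
  conf : ℕ → Config V
  act : ℕ → V → Option (Rule V)
  valid : ∀ i, IsStep G r (conf i) (act i) (conf (i + 1))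

/-- The suffix of an execution starting at time `k`. -/
def Execution.shift {G : SimpleGraph V} {r : V} (e : Execution G r) (k : ℕ) :
    Execution G r where
  conf := fun i => e.conf (k + i)
  act := fun i => e.act (k + i)
  valid := fun i => e.valid (k + i)

/-- The first round of `e` is completed by time `t`: every process enabled in
the initial configuration has executed a rule or been neutralized before `t`. -/
def CompletesRound (G : SimpleGraph V) (r : V) (e : Execution G r) (t : ℕ) : Prop :=
  ∀ u, Enabled G r (e.conf 0) u →
    ∃ j, j < t ∧ (e.act j u ≠ none ∨ ¬ Enabled G r (e.conf (j + 1)) u)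

/-- `RoundsElapsed G r e k t`: at least `k` rounds of `e` are completed by time `t`. -/
def RoundsElapsed (G : SimpleGraph V) (r : V) (e : Execution G r) : ℕ → ℕ → Prop
  | 0, t => t = 0
  | k + 1, t => ∃ s, s ≤ t ∧ RoundsElapsed G r e k s ∧
      CompletesRound G r (e.shift s) (t - s)

/-- The tree-construction rules R1–R7. -/
def TreeRule : Rule V → Prop := fun ρ =>
  ρ = Rule.R1 ∨ ρ = Rule.R2 ∨ (∃ v, ρ = Rule.R3 v) ∨ ρ = Rule.R4 ∨
  ρ = Rule.R5 ∨ ρ = Rule.R6 ∨ ρ = Rule.R7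

noncomputable def FaultyCount (G : SimpleGraph V) (r : V) (c : Config V) : ℕ :=
  {u | Faulty G r c u}.ncard

/-- Inside-safe executions: insideLegalTree processes execute only R1–R7 and
the number of Faulty processes stays constant. -/
def InsideSafeExec (G : SimpleGraph V) (r : V) (e : Execution G r) : Prop :=
  (∀ i u ρ, InsideLegalTree G r (e.conf i) u → e.act i u = some ρ → TreeRule ρ) ∧
  (∀ i, FaultyCount G r (e.conf i) = FaultyCount G r (e.conf 0))

/-- Safe executions. -/
def SafeExec (G : SimpleGraph V) (r : V) (e : Execution G r) : Prop :=
  (∀ i u ρ, InsideLegalTree G r (e.conf i) u → e.act i u = some ρ → TreeRule ρ) ∧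
  (∀ i u, Influential (e.conf i) u → UnRegular G r (e.conf i) u → e.act i u = none) ∧
  (∀ i u, ¬ PowerFaulty G (e.conf i) u → ¬ PowerFaulty G (e.conf (i + 1)) u) ∧
  (∀ i u, e.act i u ≠ some Rule.RC1 ∧ e.act i u ≠ some Rule.RC4 ∧
      e.act i u ≠ some Rule.RC3 ∧ e.act i u ≠ some Rule.RC2)

/-- Pseudo-regular executions. -/
def PseudoRegularExec (G : SimpleGraph V) (r : V) (e : Execution G r) : Prop :=
  SafeExec G r e ∧
  (∀ i u ρ, InLegalTree G r (e.conf i) u → e.act i u = some ρ → TreeRule ρ) ∧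
  (∀ i u, ¬ UnRegular G r (e.conf i) u → ¬ UnRegular G r (e.conf (i + 1)) u)

/-- Regular executions: pseudo-regular and all processes execute only R1–R7. -/
def RegularExec (G : SimpleGraph V) (r : V) (e : Execution G r) : Prop :=
  PseudoRegularExec G r e ∧ (∀ i u ρ, e.act i u = some ρ → TreeRule ρ)

/-- `u` executes rules infinitely often along `e`. -/
def ActsInfOften {G : SimpleGraph V} {r : V} (e : Execution G r) (u : V) : Prop :=
  ∀ k, ∃ i, k ≤ i ∧ e.act i u ≠ none

def A1 (G : SimpleGraph V) (r : V) (c : Config V) : Prop :=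
  ∀ u, ¬ Faulty G r c u ∧ ¬ IllegalLiveRoot G r c u

def A2 (G : SimpleGraph V) (r : V) (c : Config V) : Prop :=
  A1 G r c ∧ ∀ u, ¬ UnSafe G r c u

def A3 (G : SimpleGraph V) (r : V) (c : Config V) : Prop :=
  A2 G r c ∧ ∀ u, ¬ Influential c u ∨ InLegalTree G r c u

def A4 (G : SimpleGraph V) (r : V) (c : Config V) : Prop :=
  A3 G r c ∧ ∀ u, (c u).S ≠ StrongE

def PIC (r : V) (c : Config V) (u : V) : Prop :=
  Influential c u ∧ (c u).C ≠ (c r).C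

def PICPowerParent (r : V) (c : Config V) (u : V) : Prop :=
  PIC r c u ∧ PowerParent c u



section Stmt13Aux

set_option linter.unusedSectionVars false

open Classical

/-! ### Generic sequence lemmas -/

private lemma seq_const {α : Sort*} {g : ℕ → α} {i : ℕ} : ∀ {j : ℕ}, i ≤ j →
    (∀ t, i ≤ t → t < j → g (t+1) = g t) → g j = g i := by
  intro j
  induction j with
  | zero =>
    intro hij _
    have h0 : i = 0 := by omega
    rw [h0]
  | succ n ih =>
    intro hij h
    rcases Nat.lt_or_ge i (n+1) with hlt | hge
    · have hin : i ≤ n := by omega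
      rw [h n hin (Nat.lt_succ_self n)]
      exact ih hin (fun t ht ht' => h t ht (by omega))
    · have hi : i = n+1 := by omega
      rw [hi]

private lemma seq_change {α : Sort*} {g : ℕ → α} {i j : ℕ} (hij : i ≤ j) (hne : g j ≠ g i) :
    ∃ t, i ≤ t ∧ t < j ∧ g (t+1) ≠ g t := by
  by_contra hc
  push_neg at hc
  exact hne (seq_const hij hc)

private lemma seq_last_change {α : Sort*} {g : ℕ → α} {i : ℕ} : ∀ {j : ℕ}, i ≤ j → g j ≠ g i →
    ∃ t, i ≤ t ∧ t < j ∧ g (t+1) ≠ g t ∧ ∀ s, t < s → s ≤ j → g s = g (t+1) := by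
  intro j
  induction j with
  | zero =>
    intro hij hne
    have h0 : i = 0 := by omega
    exact absurd (by rw [h0]) hne
  | succ n ih =>
    intro hij hne
    have hin : i ≤ n := by
      by_contra hcon
      have hi : i = n + 1 := by omega
      exact hne (by rw [hi])
    by_cases h1 : g (n+1) = g n
    · obtain ⟨t, ht1, ht2, ht3, ht4⟩ := ih hin (by rw [h1] at hne; exact hne)
      refine ⟨t, ht1, by omega, ht3, fun s hs hs' => ?_⟩
      rcases Nat.lt_or_ge s (n+1) with h' | h'
      · exact ht4 s hs (by omega)
      · have hsn : s = n+1 := by omega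
        rw [hsn, h1]
        exact ht4 n ht2 le_rfl
    · exact ⟨n, hin, Nat.lt_succ_self n, h1,
        fun s hs hs' => by
          have hsn : s = n+1 := by omega
          rw [hsn]⟩

private lemma seq_first_change {α : Sort*} {g : ℕ → α} {i j : ℕ} (hij : i ≤ j) (hne : g j ≠ g i) :
    ∃ t, i ≤ t ∧ t < j ∧ g (t+1) ≠ g t ∧ ∀ s, i ≤ s → s ≤ t → g s = g i := by
  classical
  have hex : ∃ t, i ≤ t ∧ t < j ∧ g (t+1) ≠ g t := seq_change hij hne
  have hspec := Nat.find_spec hex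
  refine ⟨Nat.find hex, hspec.1, hspec.2.1, hspec.2.2, fun s hs hst => seq_const hs (fun p hp hp' => ?_)⟩
  have hmin := Nat.find_min hex (show p < Nat.find hex by omega)
  by_contra hc
  exact hmin ⟨hp, by omega, hc⟩

variable {V : Type} [Fintype V] [DecidableEq V] {G : SimpleGraph V} {r : V} {e : Execution G r}

/-! ### Basic step lemmas -/

private lemma step_none {i : ℕ} {u : V} (h : e.act i u = none) :
    e.conf (i+1) u = e.conf i u :=
  ((e.valid i).2 u).1 h

private lemma step_some {i : ℕ} {u : V} {ρ : Rule V} (h : e.act i u = some ρ) :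
    Guard G r ρ (e.conf i) u ∧ e.conf (i+1) u = execRule (e.conf i) u ρ :=
  ((e.valid i).2 u).2 ρ h

private lemma exists_actor (e : Execution G r) (i : ℕ) : ∃ u ρ, e.act i u = some ρ :=
  (e.valid i).1

private lemma act_of_change {i : ℕ} {u : V} (h : e.conf (i+1) u ≠ e.conf i u) :
    ∃ ρ, e.act i u = some ρ := by
  cases hc : e.act i u with
  | none => exact absurd (step_none hc) h
  | some ρ => exact ⟨ρ, rfl⟩

private lemma conf_const_of_no_act {u : V} {i j : ℕ} (hij : i ≤ j)
    (h : ∀ t, i ≤ t → t < j → e.act t u = none) : e.conf j u = e.conf i u :=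
  seq_const (g := fun t => e.conf t u) hij (fun t ht ht' => step_none (h t ht ht'))

/-! ### Rule classification under regularity -/

variable (hT : ∀ i u ρ, e.act i u = some ρ → TreeRule ρ)

include hT

private lemma root_act {i : ℕ} {ρ : Rule V} (h : e.act i r = some ρ) :
    ρ = Rule.R1 ∨ ρ = Rule.R2 := by
  have hg := (step_some h).1
  rcases hT i r ρ h with h1 | h1 | ⟨v, h1⟩ | h1 | h1 | h1 | h1 <;> subst h1
  · exact Or.inl rfl
  · exact Or.inr rfl
  all_goals exact absurd rfl hg.1

private lemma nonroot_act {i : ℕ} {u : V} {ρ : Rule V} (hu : u ≠ r) (h : e.act i u = some ρ) :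
    (∃ v, ρ = Rule.R3 v) ∨ ρ = Rule.R4 ∨ ρ = Rule.R5 ∨ ρ = Rule.R6 ∨ ρ = Rule.R7 := by
  have hg := (step_some h).1
  rcases hT i u ρ h with h1 | h1 | ⟨v, h1⟩ | h1 | h1 | h1 | h1 <;> subst h1
  · exact absurd hg.1 hu
  · exact absurd hg.1 hu
  · exact Or.inl ⟨v, rfl⟩
  all_goals simp

/-- The only color-changing rules are R1 (at the root) and R3. -/
private lemma color_change_act {i : ℕ} {u : V}
    (h : (e.conf (i+1) u).C ≠ (e.conf i u).C) :
    (u = r ∧ e.act i u = some Rule.R1) ∨ ∃ w, e.act i u = some (Rule.R3 w) := by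
  obtain ⟨ρ, hρ⟩ := act_of_change (fun hc => h (by rw [hc]))
  obtain ⟨hg, hx⟩ := step_some hρ
  rcases hT i u ρ hρ with h1 | h1 | ⟨v, h1⟩ | h1 | h1 | h1 | h1 <;> subst h1
  · exact Or.inl ⟨hg.1, hρ⟩
  · exact absurd (by rw [hx]; rfl) h
  · exact Or.inr ⟨v, hρ⟩
  all_goals exact absurd (by rw [hx]; rfl) h

private lemma R1_changes_color {i : ℕ} {u : V} (h : e.act i u = some Rule.R1) :
    (e.conf (i+1) u).C ≠ (e.conf i u).C := by
  have hx := (step_some h).2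
  rw [hx]
  simp [execRule]

private lemma R3_changes_color {i : ℕ} {u w : V} (h : e.act i u = some (Rule.R3 w)) :
    (e.conf (i+1) u).C ≠ (e.conf i u).C := by
  obtain ⟨hg, hx⟩ := step_some h
  rw [hx]
  exact hg.2.2.2.2.2.1

/-- The only P-changing rules are R3 and R7. -/
private lemma P_change_act {i : ℕ} {u : V}
    (h : (e.conf (i+1) u).P ≠ (e.conf i u).P) :
    (∃ w, e.act i u = some (Rule.R3 w) ∧ (e.conf (i+1) u).P = some w) ∨
      (e.act i u = some Rule.R7 ∧ (e.conf (i+1) u).P = none) := by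
  obtain ⟨ρ, hρ⟩ := act_of_change (fun hc => h (by rw [hc]))
  obtain ⟨hg, hx⟩ := step_some hρ
  rcases hT i u ρ hρ with h1 | h1 | ⟨v, h1⟩ | h1 | h1 | h1 | h1 <;> subst h1
  · exact absurd (by rw [hx]; rfl) h
  · exact absurd (by rw [hx]; rfl) h
  · exact Or.inl ⟨v, hρ, by rw [hx]; rfl⟩
  · exact absurd (by rw [hx]; rfl) h
  · exact absurd (by rw [hx]; rfl) h
  · exact absurd (by rw [hx]; rfl) h
  · exact Or.inr ⟨hρ, by rw [hx]; rfl⟩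

/-- The only ph-changing rules are R2, R3, R4, R5. -/
private lemma ph_change_act {i : ℕ} {u : V}
    (h : (e.conf (i+1) u).ph ≠ (e.conf i u).ph) :
    e.act i u = some Rule.R2 ∨ (∃ w, e.act i u = some (Rule.R3 w)) ∨
      e.act i u = some Rule.R4 ∨ e.act i u = some Rule.R5 := by
  obtain ⟨ρ, hρ⟩ := act_of_change (fun hc => h (by rw [hc]))
  obtain ⟨hg, hx⟩ := step_some hρ
  rcases hT i u ρ hρ with h1 | h1 | ⟨v, h1⟩ | h1 | h1 | h1 | h1 <;> subst h1
  · exact absurd (by rw [hx]; rfl) h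
  · exact Or.inl hρ
  · exact Or.inr (Or.inl ⟨v, hρ⟩)
  · exact Or.inr (Or.inr (Or.inl hρ))
  · exact Or.inr (Or.inr (Or.inr hρ))
  · exact absurd (by rw [hx]; rfl) h
  · exact absurd (by rw [hx]; rfl) h


/-! ### Color stabilization propagates along edges -/

private lemma colorstable_adj {u v : V} (huv : G.Adj u v)
    (hu : ∃ K, ∀ i, K ≤ i → (e.conf (i+1) u).C = (e.conf i u).C) :
    ∃ K, ∀ i, K ≤ i → (e.conf (i+1) v).C = (e.conf i v).C := by
  classical
  by_contra hv
  push_neg at hv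
  obtain ⟨M0, hM0⟩ := hu
  have hCu : ∀ i, M0 ≤ i → (e.conf i u).C = (e.conf M0 u).C := fun i hi =>
    seq_const (g := fun t => (e.conf t u).C) hi (fun t ht _ => hM0 t ht)
  set γ := (e.conf M0 u).C with hγdef
  -- next color change of v after t, with minimality
  have next : ∀ t : ℕ, ∃ t', t < t' ∧ (e.conf (t'+1) v).C ≠ (e.conf t' v).C ∧
      ∀ s, t < s → s < t' → (e.conf (s+1) v).C = (e.conf s v).C := by
    intro t
    obtain ⟨i, hi1, hi2⟩ := hv (t+1)
    have hex : ∃ s, t < s ∧ (e.conf (s+1) v).C ≠ (e.conf s v).C := ⟨i, by omega, hi2⟩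
    refine ⟨Nat.find hex, (Nat.find_spec hex).1, (Nat.find_spec hex).2, fun s hs hs' => ?_⟩
    by_contra hc
    exact Nat.find_min hex hs' ⟨hs, hc⟩
  have humem : u ∈ G.neighborSet v := (G.mem_neighborSet v u).mpr huv.symm
  have key : ∀ t t', M0 ≤ t → (e.conf (t+1) v).C ≠ (e.conf t v).C →
      t < t' → (e.conf (t'+1) v).C ≠ (e.conf t' v).C →
      (∀ s, t < s → s < t' → (e.conf (s+1) v).C = (e.conf s v).C) →
      (e.conf (t+1) v).C = γ := by
    intro t t' ht hch ht' hch' hmid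
    have hCc : ∀ j, t+1 ≤ j → j ≤ t' → (e.conf j v).C = (e.conf (t+1) v).C := fun j h1 h2 =>
      seq_const (g := fun s => (e.conf s v).C) h1 (fun s hs hs' => hmid s (by omega) (by omega))
    have finish : ∀ s, t+1 ≤ s → s ≤ t' → (e.conf s v).C = (e.conf s u).C →
        (e.conf (t+1) v).C = γ := by
      intro s h1 h2 h3
      rw [← hCc s h1 h2, h3]
      exact hCu s (by omega)
    by_cases hvr : v = r
    · subst hvr
      have hact : e.act t v = some Rule.R1 := by
        rcases color_change_act hT hch with ⟨_, h⟩ | ⟨w, h⟩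
        · exact h
        · exact absurd rfl ((step_some h).1).1
      have hS1 : (e.conf (t+1) v).S = Power := by rw [(step_some hact).2]; rfl
      have hact' : e.act t' v = some Rule.R1 := by
        rcases color_change_act hT hch' with ⟨_, h⟩ | ⟨w, h⟩
        · exact h
        · exact absurd rfl ((step_some h).1).1
      obtain ⟨-, -, hELP, -⟩ := (step_some hact').1
      rcases hELP.2 with hEFP | hEP
      · exact finish t' (by omega) le_rfl (hEFP.2.2 u humem).symm
      · -- S(r, t') = Working ≠ Power = S(r, t+1)
        have hSne : (e.conf t' v).S ≠ (e.conf (t+1) v).S := by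
          rw [hEP.1, hS1]; decide
        obtain ⟨s, hs1, hs2, hs3, hs4⟩ :=
          seq_first_change (g := fun j => (e.conf j v).S) (show t+1 ≤ t' by omega) hSne
        have hSP : (e.conf s v).S = Power := (hs4 s hs1 le_rfl).trans hS1
        obtain ⟨ρ, hρ⟩ := act_of_change (i := s) (u := v) (fun hcs => hs3 (by rw [hcs]))
        rcases root_act hT hρ with rfl | rfl
        · exact absurd (hmid s (by omega) (by omega)) (R1_changes_color hT hρ)
        · obtain ⟨-, -, hEIP⟩ := (step_some hρ).1
          rcases hEIP.2 with hEFP2 | hEP2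
          · exact finish s (by omega) (by omega) (hEFP2.2.2 u humem).symm
          · rw [hEP2.1] at hSP
            exact absurd hSP (by decide)
    · -- v ≠ r : color changes are R3
      obtain ⟨w, hact⟩ : ∃ w, e.act t v = some (Rule.R3 w) := by
        rcases color_change_act hT hch with ⟨hr', _⟩ | h
        · exact absurd hr' hvr
        · exact h
      obtain ⟨hg, hx⟩ := step_some hact
      have hDet : Detached G r (e.conf t) v := hg.2.2.1
      have hP1 : (e.conf (t+1) v).P = some w := by rw [hx]; rfl
      have hS1 : (e.conf (t+1) v).S = Idle := by rw [hx]; rfl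
      have hnoR3 : ∀ s w', t < s → s < t' → e.act s v ≠ some (Rule.R3 w') :=
        fun s w' h1 h2 hs => R3_changes_color hT hs (hmid s h1 h2)
      obtain ⟨w', hact'⟩ : ∃ w', e.act t' v = some (Rule.R3 w') := by
        rcases color_change_act hT hch' with ⟨hr', _⟩ | h
        · exact absurd hr' hvr
        · exact h
      have hg' := (step_some hact').1
      have hDet' : Detached G r (e.conf t') v := hg'.2.2.1
      have hPn : (e.conf t' v).P = none := by
        rcases hDet'.2.1 with h | h
        · exact h
        · exact absurd h hvr
      -- P changes somewhere in [t+1, t')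
      have hPne : (e.conf t' v).P ≠ (e.conf (t+1) v).P := by rw [hPn, hP1]; simp
      obtain ⟨s0, hs0a, hs0b, hs0c⟩ :=
        seq_change (g := fun j => (e.conf j v).P) (show t+1 ≤ t' by omega) hPne
      have hact0 : e.act s0 v = some Rule.R7 := by
        rcases P_change_act hT hs0c with ⟨w'', hw'', -⟩ | ⟨h7, -⟩
        · exact absurd hw'' (hnoR3 s0 w'' (by omega) (by omega))
        · exact h7
      have hg0 := (step_some hact0).1
      rcases hg0.2.2.2.2 with hEFP | hEP
      · exact finish s0 (by omega) (by omega) (hEFP.2.2 u humem).symm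
      · -- S(v,s0) = Working : v executed R4, hence had a child, hence was Power at some point
        have hSne : (e.conf s0 v).S ≠ (e.conf (t+1) v).S := by
          rw [hEP.1, hS1]; decide
        obtain ⟨s2, hs2a, hs2b, hs2c, hs2d⟩ :=
          seq_last_change (g := fun j => (e.conf j v).S) (show t+1 ≤ s0 by omega) hSne
        have hSW : (e.conf (s2+1) v).S = Working :=
          (hs2d s0 hs2b le_rfl).symm.trans hEP.1
        obtain ⟨ρ2, hρ2⟩ := act_of_change (i := s2) (u := v) (fun hcs => hs2c (by rw [hcs]))
        have hact2 : e.act s2 v = some Rule.R4 := by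
          rcases nonroot_act hT hvr hρ2 with ⟨w'', rfl⟩ | rfl | rfl | rfl | rfl
          · exact absurd hρ2 (hnoR3 s2 w'' (by omega) (by omega))
          · exact hρ2
          all_goals (rw [(step_some hρ2).2] at hSW; simp [execRule] at hSW)
        have hg2 := (step_some hact2).1
        have hCh2 : Child G (e.conf s2) v ≠ ∅ := hg2.2.2.2
        obtain ⟨x, hx2⟩ : ∃ x, x ∈ Child G (e.conf s2) v := Set.nonempty_iff_ne_empty.mpr hCh2
        simp only [Child, Set.mem_setOf_eq] at hx2
        obtain ⟨hAdjx, hPx⟩ := hx2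
        have hPxt : (e.conf t x).P ≠ some v := by
          intro hc
          exact Set.eq_empty_iff_forall_notMem.mp hDet.1 x ⟨hAdjx, hc⟩
        have hPxne : (e.conf s2 x).P ≠ (e.conf t x).P := by
          intro hc
          exact hPxt (hc ▸ hPx)
        obtain ⟨q, hqa, hqb, hqc, hqd⟩ :=
          seq_last_change (g := fun j => (e.conf j x).P) (show t ≤ s2 by omega) hPxne
        have hPq : (e.conf (q+1) x).P = some v := (hqd s2 hqb le_rfl).symm.trans hPx
        have hSvq : (e.conf q v).S = Power := by
          rcases P_change_act hT hqc with ⟨w3, hw3, hp3⟩ | ⟨-, hp7⟩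
          · have hw3v : w3 = v := Option.some.inj (hp3.symm.trans hPq)
            subst hw3v
            exact (step_some hw3).1.2.2.2.2.2.2
          · rw [hp7] at hPq
            exact absurd hPq (by simp)
        have hqt : t < q := by
          rcases Nat.lt_or_ge t q with h | h
          · exact h
          · have hq : q = t := by omega
            rw [hq] at hSvq
            exact absurd hSvq hDet.2.2
        have hSvt' : (e.conf t' v).S ≠ (e.conf q v).S := by
          rw [hSvq]; exact hDet'.2.2
        obtain ⟨s4, hs4a, hs4b, hs4c, hs4d⟩ :=
          seq_first_change (g := fun j => (e.conf j v).S) (show q ≤ t' by omega) hSvt'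
        have hSs4 : (e.conf s4 v).S = Power := (hs4d s4 hs4a le_rfl).trans hSvq
        obtain ⟨ρ4, hρ4⟩ := act_of_change (i := s4) (u := v) (fun hcs => hs4c (by rw [hcs]))
        rcases nonroot_act hT hvr hρ4 with ⟨w4, rfl⟩ | rfl | rfl | rfl | rfl
        · exact absurd hρ4 (hnoR3 s4 w4 (by omega) (by omega))
        · obtain ⟨p4, -, -, hIdle, -⟩ := (step_some hρ4).1.2.2.1
          rw [hIdle] at hSs4
          exact absurd hSs4 (by decide)
        · obtain ⟨p4, -, -, hIdle, -⟩ := (step_some hρ4).1.2.2.1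
          rw [hIdle] at hSs4
          exact absurd hSs4 (by decide)
        · rcases (step_some hρ4).1.2.2.2 with hEFP4 | hEP4
          · exact finish s4 (by omega) (by omega) (hEFP4.2.2 u humem).symm
          · rw [hEP4.1] at hSs4
            exact absurd hSs4 (by decide)
        · rcases (step_some hρ4).1.2.2.2.2 with hEFP4 | hEP4
          · exact finish s4 (by omega) (by omega) (hEFP4.2.2 u humem).symm
          · rw [hEP4.1] at hSs4
            exact absurd hSs4 (by decide)
  -- three consecutive color changes give a contradiction
  obtain ⟨t1, ht1a, ht1b⟩ := hv M0
  obtain ⟨t2, h12, hch2, hmid12⟩ := next t1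
  obtain ⟨t3, h23, hch3, hmid23⟩ := next t2
  have k1 : (e.conf (t1+1) v).C = γ := key t1 t2 ht1a ht1b h12 hch2 hmid12
  have k2 : (e.conf (t2+1) v).C = γ := key t2 t3 (by omega) hch2 h23 hch3 hmid23
  have e3 : (e.conf t2 v).C = (e.conf (t1+1) v).C :=
    seq_const (g := fun s => (e.conf s v).C) (show t1+1 ≤ t2 by omega)
      (fun s hs hs' => hmid12 s (by omega) (by omega))
  exact hch2 (k2.trans (e3.trans k1).symm)


private lemma colorstable_all (hconn : G.Connected) {u0 : V}
    (h0 : ∃ K, ∀ i, K ≤ i → (e.conf (i+1) u0).C = (e.conf i u0).C) (w : V) :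
    ∃ K, ∀ i, K ≤ i → (e.conf (i+1) w).C = (e.conf i w).C := by
  have step : ∀ (a b : V), G.Walk a b →
      (∃ K, ∀ i, K ≤ i → (e.conf (i+1) a).C = (e.conf i a).C) →
      (∃ K, ∀ i, K ≤ i → (e.conf (i+1) b).C = (e.conf i b).C) := by
    intro a b p
    induction p with
    | nil => exact id
    | cons h p ih => exact fun ha => ih (colorstable_adj hT h ha)
  obtain ⟨p⟩ := hconn.preconnected u0 w
  exact step u0 w p h0

private lemma exists_N2 (hconn : G.Connected) {u0 : V}
    (h0 : ∃ K, ∀ i, K ≤ i → (e.conf (i+1) u0).C = (e.conf i u0).C) :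
    ∃ N2, ∀ u i, N2 ≤ i → (e.conf (i+1) u).C = (e.conf i u).C := by
  choose K hK using fun u => colorstable_all hT hconn h0 u
  exact ⟨Finset.univ.sup K, fun u i hi =>
    hK u i (le_trans (Finset.le_sup (Finset.mem_univ u)) hi)⟩

omit hT in
private lemma exists_inf_actor (e : Execution G r) :
    ∃ u : V, ∀ k, ∃ i, k ≤ i ∧ e.act i u ≠ none := by
  classical
  have hchoice : ∀ u : V, ∃ K, (¬ (∀ k, ∃ i, k ≤ i ∧ e.act i u ≠ none)) →
      ∀ i, K ≤ i → e.act i u = none := by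
    intro u
    by_cases h : ∀ k, ∃ i, k ≤ i ∧ e.act i u ≠ none
    · exact ⟨0, fun hc => absurd h hc⟩
    · push_neg at h
      obtain ⟨K, hK⟩ := h
      exact ⟨K, fun _ i hi => hK i hi⟩
  choose K hK using hchoice
  obtain ⟨u, ρ, hu⟩ := exists_actor e (Finset.univ.sup K)
  refine ⟨u, ?_⟩
  by_contra hc
  have := hK u hc _ (Finset.le_sup (Finset.mem_univ u))
  rw [hu] at this
  exact Option.some_ne_none ρ this

section Era

variable {N2 N3 : ℕ}
variable (hN2 : ∀ u i, N2 ≤ i → (e.conf (i+1) u).C = (e.conf i u).C)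
variable (hN23 : N2 ≤ N3)
variable (hR7 : ∀ i u, N3 ≤ i → e.act i u ≠ some Rule.R7)

include hN2

private lemma noR1 {i : ℕ} {u : V} (hi : N2 ≤ i) : e.act i u ≠ some Rule.R1 :=
  fun h => R1_changes_color hT h (hN2 u i hi)

private lemma noR3 {i : ℕ} {u : V} (w : V) (hi : N2 ≤ i) : e.act i u ≠ some (Rule.R3 w) :=
  fun h => R3_changes_color hT h (hN2 u i hi)

/-- After `N2`, the root only executes R2. -/
private lemma root_act_era {i : ℕ} {ρ : Rule V} (hi : N2 ≤ i)
    (h : e.act i r = some ρ) : ρ = Rule.R2 := by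
  rcases root_act hT h with rfl | rfl
  · exact absurd h (noR1 hT hN2 hi)
  · rfl

private lemma exists_N3 : ∃ N3, N2 ≤ N3 ∧ ∀ i u, N3 ≤ i → e.act i u ≠ some Rule.R7 := by
  classical
  have hu : ∀ u : V, ∃ K, N2 ≤ K ∧ ∀ i, K ≤ i → e.act i u ≠ some Rule.R7 := by
    intro u
    by_cases h : ∃ s, N2 ≤ s ∧ e.act s u = some Rule.R7
    · obtain ⟨s, hs1, hs2⟩ := h
      have hPnone : ∀ j, s < j → (e.conf j u).P = none := by
        intro j hj
        induction j, hj using Nat.le_induction with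
        | base => rw [(step_some hs2).2]; rfl
        | succ n hn ih =>
          by_cases hnc : (e.conf (n+1) u).P = (e.conf n u).P
          · rw [hnc]; exact ih
          · rcases P_change_act hT hnc with ⟨w, hw, -⟩ | ⟨-, hp⟩
            · exact absurd hw (noR3 hT hN2 w (by omega))
            · exact hp
      refine ⟨s+1, by omega, fun i hi h7 => ?_⟩
      exact ((step_some h7).1.2.2.1) (hPnone i (by omega))
    · push_neg at h
      exact ⟨N2, le_rfl, fun i hi h7 => h i hi h7⟩
  choose K hK using hu
  refine ⟨max N2 (Finset.univ.sup K), le_max_left _ _, fun i u hi => (hK u).2 i ?_⟩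
  have := Finset.le_sup (f := K) (Finset.mem_univ u)
  omega

include hN23 hR7

/-- After `N3`, non-root processes only execute R4, R5, R6. -/
private lemma nonroot_act_era {i : ℕ} {u : V} {ρ : Rule V} (hu : u ≠ r) (hi : N3 ≤ i)
    (h : e.act i u = some ρ) : ρ = Rule.R4 ∨ ρ = Rule.R5 ∨ ρ = Rule.R6 := by
  rcases nonroot_act hT hu h with ⟨w, rfl⟩ | rfl | rfl | rfl | rfl
  · exact absurd h (noR3 hT hN2 w (by omega))
  · exact Or.inl rfl
  · exact Or.inr (Or.inl rfl)
  · exact Or.inr (Or.inr rfl)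
  · exact absurd h (hR7 i u hi)

private lemma P_step {t : ℕ} {u : V} (ht : N3 ≤ t) :
    (e.conf (t+1) u).P = (e.conf t u).P := by
  by_contra hne
  rcases P_change_act hT hne with ⟨w, hw, -⟩ | ⟨h7, -⟩
  · exact noR3 hT hN2 w (by omega) hw
  · exact hR7 t u ht h7

private lemma P_const {u : V} {i : ℕ} (hi : N3 ≤ i) :
    (e.conf i u).P = (e.conf N3 u).P :=
  seq_const (g := fun t => (e.conf t u).P) hi (fun t ht _ => P_step hT hN2 hN23 hR7 ht)

private lemma Child_const {u : V} {i : ℕ} (hi : N3 ≤ i) :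
    Child G (e.conf i) u = Child G (e.conf N3) u := by
  ext x
  simp only [Child, Set.mem_setOf_eq]
  rw [P_const hT hN2 hN23 hR7 (u := x) hi]

/-- The R5 trap: a non-root process executing R5 after `N3` never acts again. -/
private lemma R5_trap {t : ℕ} {u : V} (hu : u ≠ r) (ht : N3 ≤ t)
    (h : e.act t u = some Rule.R5) : ∀ t', t < t' → e.act t' u = none := by
  have hg := (step_some h).1
  have hCh : Child G (e.conf N3) u = ∅ := by
    rw [← Child_const hT hN2 hN23 hR7 (u := u) ht]
    exact hg.2.2.2.1
  have hChAll : ∀ j, N3 ≤ j → Child G (e.conf j) u = ∅ := fun j hj =>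
    (Child_const hT hN2 hN23 hR7 hj).trans hCh
  have claim : ∀ j, t < j → (e.conf j u).S = Power ∧
      ∀ t'', t < t'' → t'' < j → e.act t'' u = none := by
    intro j hj
    induction j, hj using Nat.le_induction with
    | base =>
      refine ⟨by rw [(step_some h).2]; rfl, fun t'' h1 h2 => by omega⟩
    | succ n hn ih =>
      have hact : e.act n u = none := by
        cases hc : e.act n u with
        | none => rfl
        | some ρ =>
          exfalso
          rcases nonroot_act_era hT hN2 hN23 hR7 hu (by omega) hc with rfl | rfl | rfl
          · obtain ⟨p, -, -, hIdle, -⟩ := (step_some hc).1.2.2.1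
            rw [ih.1] at hIdle
            exact Status.noConfusion hIdle
          · obtain ⟨p, -, -, hIdle, -⟩ := (step_some hc).1.2.2.1
            rw [ih.1] at hIdle
            exact Status.noConfusion hIdle
          · exact ((step_some hc).1.2.2.1) (hChAll n (by omega))
      refine ⟨by rw [step_none hact]; exact ih.1, fun t'' h1 h2 => ?_⟩
      rcases Nat.lt_or_ge t'' n with h' | h'
      · exact ih.2 t'' h1 h'
      · have : t'' = n := by omega
        rw [this]; exact hact
  exact fun t' ht' => (claim (t'+1) (by omega)).2 t' ht' (by omega)

/-- Classification of acts of infinitely-acting processes after `N3`. -/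
private lemma inf_act_era {i : ℕ} {u : V} {ρ : Rule V} (hu : u ≠ r)
    (hinf : ∀ k, ∃ j, k ≤ j ∧ e.act j u ≠ none) (hi : N3 ≤ i)
    (h : e.act i u = some ρ) : ρ = Rule.R4 ∨ ρ = Rule.R6 := by
  rcases nonroot_act_era hT hN2 hN23 hR7 hu hi h with rfl | rfl | rfl
  · exact Or.inl rfl
  · exfalso
    obtain ⟨j, hj1, hj2⟩ := hinf (i+1)
    exact hj2 (R5_trap hT hN2 hN23 hR7 hu hi h j (by omega))
  · exact Or.inr rfl

/-- Every act of an infinitely-acting process after `N3` has a quiet subtree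
and a nonempty child set. -/
private lemma quiet_act {i : ℕ} {u : V} {ρ : Rule V}
    (hinf : ∀ k, ∃ j, k ≤ j ∧ e.act j u ≠ none) (hi : N3 ≤ i)
    (h : e.act i u = some ρ) :
    QuietSubTree G (e.conf i) u ∧ Child G (e.conf i) u ≠ ∅ := by
  by_cases hu : u = r
  · subst hu
    have : ρ = Rule.R2 := root_act_era hT hN2 (by omega) h
    subst this
    obtain ⟨-, -, hCh, hE⟩ := (step_some h).1
    rcases hE with hEFP | hEP
    · exact ⟨hEFP.2.1, hCh⟩
    · exact ⟨hEP.2, hCh⟩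
  · rcases inf_act_era hT hN2 hN23 hR7 hu hinf hi h with rfl | rfl
    · obtain ⟨-, -, hNP, hCh⟩ := (step_some h).1
      obtain ⟨p, -, hQ, -, -⟩ := hNP
      exact ⟨hQ, hCh⟩
    · obtain ⟨-, -, hCh, hE⟩ := (step_some h).1
      rcases hE with hEFP | hEP
      · exact ⟨hEFP.2.1, hCh⟩
      · exact ⟨hEP.2, hCh⟩

/-- Statuses after a first act: Idle or Working. -/
private lemma status_era {t : ℕ} {u : V} (hinf : ∀ k, ∃ j, k ≤ j ∧ e.act j u ≠ none)
    (ht : N3 ≤ t) (hact : e.act t u ≠ none) :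
    ∀ j, t < j → (e.conf j u).S = Idle ∨ (e.conf j u).S = Working := by
  have post : ∀ i, N3 ≤ i → e.act i u ≠ none →
      (e.conf (i+1) u).S = Idle ∨ (e.conf (i+1) u).S = Working := by
    intro i hi hia
    cases hc : e.act i u with
    | none => exact absurd hc hia
    | some ρ =>
      by_cases hu : u = r
      · subst hu
        have : ρ = Rule.R2 := root_act_era hT hN2 (by omega) hc
        subst this
        exact Or.inr (by rw [(step_some hc).2]; rfl)
      · rcases inf_act_era hT hN2 hN23 hR7 hu hinf hi hc with rfl | rfl
        · exact Or.inr (by rw [(step_some hc).2]; rfl)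
        · exact Or.inl (by rw [(step_some hc).2]; rfl)
  intro j hj
  induction j, hj using Nat.le_induction with
  | base => exact post t ht hact
  | succ n hn ih =>
    cases hc : e.act n u with
    | none => rw [step_none hc]; exact ih
    | some ρ => exact post n (by omega) (by rw [hc]; exact Option.some_ne_none ρ)

/-- ph-changes of infinitely-acting non-root processes after `N3` are R4 acts. -/
private lemma ph_change_era {i : ℕ} {u : V} (hu : u ≠ r)
    (hinf : ∀ k, ∃ j, k ≤ j ∧ e.act j u ≠ none) (hi : N3 ≤ i)
    (h : (e.conf (i+1) u).ph ≠ (e.conf i u).ph) : e.act i u = some Rule.R4 := by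
  rcases ph_change_act hT h with h2 | ⟨w, h3⟩ | h4 | h5
  · exact absurd ((step_some h2).1).1 hu
  · exact absurd h3 (noR3 hT hN2 w (by omega))
  · exact h4
  · exfalso
    obtain ⟨j, hj1, hj2⟩ := hinf (i+1)
    exact hj2 (R5_trap hT hN2 hN23 hR7 hu hi h5 j (by omega))

omit hT hN2 hN23 hR7 in
private lemma first_act {u : V} (hinf : ∀ k, ∃ j, k ≤ j ∧ e.act j u ≠ none) (t : ℕ) :
    ∃ t', t < t' ∧ e.act t' u ≠ none ∧ ∀ s, t < s → s < t' → e.act s u = none := by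
  classical
  obtain ⟨j, hj1, hj2⟩ := hinf (t+1)
  have hex : ∃ s, t < s ∧ e.act s u ≠ none := ⟨j, by omega, hj2⟩
  refine ⟨Nat.find hex, (Nat.find_spec hex).1, (Nat.find_spec hex).2, fun s hs hs' => ?_⟩
  by_contra hc
  exact Nat.find_min hex hs' ⟨hs, hc⟩

/-- Non-root infinitely-acting processes execute R4 beyond any point. -/
private lemma R4_exists {u : V} (hu : u ≠ r)
    (hinf : ∀ k, ∃ j, k ≤ j ∧ e.act j u ≠ none) {k : ℕ} (hk : N3 ≤ k) :
    ∃ t, k ≤ t ∧ e.act t u = some Rule.R4 := by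
  obtain ⟨t0, ht0, hact0⟩ := hinf k
  cases hc : e.act t0 u with
  | none => exact absurd hc hact0
  | some ρ =>
    rcases inf_act_era hT hN2 hN23 hR7 hu hinf (by omega) hc with rfl | rfl
    · exact ⟨t0, ht0, hc⟩
    · -- R6 : the next act must be R4
      have hS : (e.conf (t0+1) u).S = Idle := by rw [(step_some hc).2]; rfl
      obtain ⟨t1, ht1a, ht1b, ht1c⟩ := first_act hinf t0
      have hSc : (e.conf t1 u).S = Idle := by
        rw [conf_const_of_no_act (u := u) (show t0+1 ≤ t1 by omega)
          (fun s hs hs' => ht1c s (by omega) (by omega))]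
        exact hS
      cases hc1 : e.act t1 u with
      | none => exact absurd hc1 ht1b
      | some ρ1 =>
        rcases inf_act_era hT hN2 hN23 hR7 hu hinf (by omega) hc1 with rfl | rfl
        · exact ⟨t1, by omega, hc1⟩
        · exfalso
          obtain ⟨-, -, -, hE⟩ := (step_some hc1).1
          rcases hE with hEFP | hEP
          · exact Status.noConfusion (hSc.symm.trans hEFP.1)
          · exact Status.noConfusion (hSc.symm.trans hEP.1)


private lemma child_nonempty {u : V} (hinf : ∀ k, ∃ j, k ≤ j ∧ e.act j u ≠ none) :
    Child G (e.conf N3) u ≠ ∅ := by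
  obtain ⟨t, ht, hact⟩ := hinf N3
  cases hc : e.act t u with
  | none => exact absurd hc hact
  | some ρ =>
    have := (quiet_act hT hN2 hN23 hR7 hinf ht hc).2
    rw [Child_const hT hN2 hN23 hR7 ht] at this
    exact this

private lemma child_inf {u x : V} (hinf : ∀ k, ∃ j, k ≤ j ∧ e.act j u ≠ none)
    (hx : x ∈ Child G (e.conf N3) u) :
    ∀ k, ∃ j, k ≤ j ∧ e.act j x ≠ none := by
  classical
  intro k
  by_cases hu : u = r
  · obtain ⟨t1, ht1, hact1⟩ := hinf (max k N3)
    obtain ⟨t2, ht2a, ht2b, ht2c⟩ := first_act hinf t1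
    cases hc1 : e.act t1 u with
    | none => exact absurd hc1 hact1
    | some ρ1 =>
      cases hc2 : e.act t2 u with
      | none => exact absurd hc2 ht2b
      | some ρ2 =>
        obtain rfl : ρ1 = Rule.R2 :=
          root_act_era hT hN2 (i := t1) (by omega) (hu ▸ hc1)
        obtain rfl : ρ2 = Rule.R2 :=
          root_act_era hT hN2 (i := t2) (by omega) (hu ▸ hc2)
        have hQ1 := (quiet_act hT hN2 hN23 hR7 hinf (show N3 ≤ t1 by omega) hc1).1
        have hQ2 := (quiet_act hT hN2 hN23 hR7 hinf (show N3 ≤ t2 by omega) hc2).1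
        have hx1 : x ∈ Child G (e.conf t1) u := by
          rw [Child_const hT hN2 hN23 hR7 (show N3 ≤ t1 by omega)]; exact hx
        have hx2 : x ∈ Child G (e.conf t2) u := by
          rw [Child_const hT hN2 hN23 hR7 (show N3 ≤ t2 by omega)]; exact hx
        have hflip : (e.conf (t1+1) u).ph = !(e.conf t1 u).ph := by
          rw [(step_some hc1).2]; rfl
        have hconst : e.conf t2 u = e.conf (t1+1) u :=
          conf_const_of_no_act (show t1+1 ≤ t2 by omega)
            (fun s hs hs' => ht2c s (by omega) (by omega))
        have hne : (e.conf t2 x).ph ≠ (e.conf t1 x).ph := by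
          rw [(hQ1 x hx1).2, (hQ2 x hx2).2, hconst, hflip]
          simp
        obtain ⟨s, hsa, hsb, hsc⟩ :=
          seq_change (g := fun j => (e.conf j x).ph) (le_of_lt ht2a) hne
        obtain ⟨ρ', hρ'⟩ := act_of_change (i := s) (u := x) (fun hcs => hsc (by rw [hcs]))
        refine ⟨s, by omega, by rw [hρ']; simp⟩
  · obtain ⟨t1, ht1, hact1⟩ := R4_exists hT hN2 hN23 hR7 hu hinf (le_max_right k N3)
    have hex : ∃ s, t1 < s ∧ e.act s u = some Rule.R4 := by
      obtain ⟨t, ht, h⟩ := R4_exists hT hN2 hN23 hR7 hu hinf (show N3 ≤ t1+1 by omega)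
      exact ⟨t, by omega, h⟩
    set t2 := Nat.find hex with ht2def
    obtain ⟨ht2a, hact2⟩ := Nat.find_spec hex
    have ht2c : ∀ s, t1 < s → s < t2 → e.act s u ≠ some Rule.R4 := by
      intro s h1 h2 hcon
      exact Nat.find_min hex h2 ⟨h1, hcon⟩
    have hphconst : (e.conf t2 u).ph = (e.conf (t1+1) u).ph := by
      refine seq_const (g := fun j => (e.conf j u).ph) (show t1+1 ≤ t2 by omega)
        (fun s hs hs' => ?_)
      by_contra hcon
      exact ht2c s (by omega) (by omega)
        (ph_change_era hT hN2 hN23 hR7 hu hinf (by omega) hcon)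
    obtain ⟨-, -, hNP, -⟩ := (step_some hact1).1
    obtain ⟨p, hp, hQ1, -, hphne⟩ := hNP
    have hexec : (e.conf (t1+1) u).ph = (e.conf t1 p).ph := by
      rw [(step_some hact1).2]
      simp [execRule, parentPh, hp]
    obtain ⟨-, -, hNP2, -⟩ := (step_some hact2).1
    obtain ⟨p2, -, hQ2, -, -⟩ := hNP2
    have hx1 : x ∈ Child G (e.conf t1) u := by
      rw [Child_const hT hN2 hN23 hR7 (by omega)]; exact hx
    have hx2 : x ∈ Child G (e.conf t2) u := by
      rw [Child_const hT hN2 hN23 hR7 (by omega)]; exact hx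
    have hne : (e.conf t2 x).ph ≠ (e.conf t1 x).ph := by
      rw [(hQ1 x hx1).2, (hQ2 x hx2).2, hphconst, hexec]
      exact Ne.symm hphne
    obtain ⟨s, hsa, hsb, hsc⟩ :=
      seq_change (g := fun j => (e.conf j x).ph) (le_of_lt ht2a) hne
    obtain ⟨ρ', hρ'⟩ := act_of_change (i := s) (u := x) (fun hcs => hsc (by rw [hcs]))
    refine ⟨s, by omega, by rw [hρ']; simp⟩

private lemma endgame (f : V → V) (M : V → Prop)
    (hne : ∃ v, M v)
    (hMinf : ∀ v, M v → ∀ k, ∃ i, k ≤ i ∧ e.act i v ≠ none)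
    (hMf : ∀ v, M v → M (f v) ∧ f v ∈ Child G (e.conf N3) v)
    (hMsurj : ∀ v, M v → ∃ w, M w ∧ f w = v) : False := by
  classical
  -- every member has a parent which is a member
  have hParent : ∀ v, M v → ∃ p, M p ∧ (∀ i, N3 ≤ i → (e.conf i v).P = some p) := by
    intro v hv
    obtain ⟨w, hw, hfw⟩ := hMsurj v hv
    have hc := (hMf w hw).2
    rw [hfw] at hc
    simp only [Child, Set.mem_setOf_eq] at hc
    refine ⟨w, hw, fun i hi => ?_⟩
    rw [P_const hT hN2 hN23 hR7 hi]
    exact hc.2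
  -- no member is the root
  have hnr : ∀ v, M v → v ≠ r := by
    intro v hv hvr
    subst hvr
    obtain ⟨tr, htr, hactr⟩ := hMinf v hv N3
    have hSW : ∀ j, tr < j → (e.conf j v).S = Working := by
      intro j hj
      induction j, hj using Nat.le_induction with
      | base =>
        cases hc : e.act tr v with
        | none => exact absurd hc hactr
        | some ρ =>
          obtain rfl : ρ = Rule.R2 := root_act_era hT hN2 (by omega) hc
          rw [(step_some hc).2]; rfl
      | succ n hn ih =>
        cases hc : e.act n v with
        | none => rw [step_none hc]; exact ih
        | some ρ =>
          obtain rfl : ρ = Rule.R2 := root_act_era hT hN2 (by omega) hc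
          rw [(step_some hc).2]; rfl
    obtain ⟨w, hw, hfw⟩ := hMsurj v hv
    have hcw := (hMf w hw).2
    rw [hfw] at hcw
    obtain ⟨t, ht, hactw⟩ := hMinf w hw (max N3 (tr+1))
    cases hc : e.act t w with
    | none => exact absurd hc hactw
    | some ρ =>
      have hq := (quiet_act hT hN2 hN23 hR7 (hMinf w hw) (by omega) hc).1
      have hrc : v ∈ Child G (e.conf t) w := by
        rw [Child_const hT hN2 hN23 hR7 (by omega)]
        exact hcw
      have hidle := (hq v hrc).1
      rw [hSW t (by omega)] at hidle
      exact Status.noConfusion hidle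
  -- N4 : all members have status Idle/Working from N4 on
  obtain ⟨N4, hN34, hstat⟩ : ∃ N4, N3 ≤ N4 ∧ ∀ v, M v → ∀ i, N4 ≤ i →
      ((e.conf i v).S = Idle ∨ (e.conf i v).S = Working) := by
    have hch : ∀ v : V, ∃ K, N3 ≤ K ∧ (M v → ∀ i, K ≤ i →
        ((e.conf i v).S = Idle ∨ (e.conf i v).S = Working)) := by
      intro v
      by_cases hv : M v
      · obtain ⟨t, ht, hact⟩ := hMinf v hv N3
        exact ⟨t+1, by omega, fun _ i hi =>
          status_era hT hN2 hN23 hR7 (hMinf v hv) ht hact i (by omega)⟩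
      · exact ⟨N3, le_rfl, fun hc => absurd hc hv⟩
    choose K hK using hch
    obtain ⟨v0, hv0⟩ := hne
    refine ⟨Finset.univ.sup K, le_trans (hK v0).1 (Finset.le_sup (Finset.mem_univ v0)),
      fun v hv i hi => (hK v).2 hv i (le_trans (Finset.le_sup (Finset.mem_univ v)) hi)⟩
  -- act typing
  have htype4 : ∀ (v : V) (i : ℕ), e.act i v = some Rule.R4 → (e.conf i v).S = Idle := by
    intro v i h
    obtain ⟨p, -, -, hIdle, -⟩ := (step_some h).1.2.2.1
    exact hIdle
  have htype6 : ∀ (v : V) (i : ℕ), M v → N4 ≤ i → e.act i v = some Rule.R6 →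
      (e.conf i v).S = Working := by
    intro v i hv hi h
    rcases (step_some h).1.2.2.2 with hEFP | hEP
    · rcases hstat v hv i hi with hs | hs <;>
        exact Status.noConfusion (hs.symm.trans hEFP.1)
    · exact hEP.1
  have hacttype : ∀ (v : V) (i : ℕ) (ρ : Rule V), M v → N4 ≤ i → e.act i v = some ρ →
      ρ = Rule.R4 ∨ ρ = Rule.R6 :=
    fun v i ρ hv hi h =>
      inf_act_era hT hN2 hN23 hR7 (hnr v hv) (hMinf v hv) (by omega) h
  -- the descent step
  have two_acts : ∀ (v : V) (a b : ℕ), M v → N4 ≤ a → a < b →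
      e.act a v ≠ none → e.act b v ≠ none → (∀ t, a < t → t < b → e.act t v = none) →
      ∃ x s s', M x ∧ a ≤ s ∧ s < s' ∧ s' < b ∧ e.act s x ≠ none ∧ e.act s' x ≠ none := by
    intro v a b hv ha hab hacta hactb hmid
    cases hca : e.act a v with
    | none => exact absurd hca hacta
    | some ρa =>
    cases hcb : e.act b v with
    | none => exact absurd hcb hactb
    | some ρb =>
      have hconst : e.conf b v = e.conf (a+1) v :=
        conf_const_of_no_act (show a+1 ≤ b by omega)
          (fun s hs hs' => hmid s (by omega) hs')
      obtain ⟨p, hpM, hPp⟩ := hParent v hv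
      rcases hacttype v a ρa hv ha hca with rfl | rfl
      · -- R4 at a, so R6 at b; the child x must act twice in between
        have hSb : (e.conf b v).S = Working := by
          rw [hconst, (step_some hca).2]; rfl
        obtain rfl : ρb = Rule.R6 := by
          rcases hacttype v b ρb hv (by omega) hcb with rfl | rfl
          · exact absurd (hSb.symm.trans (htype4 v b hcb)) (by decide)
          · rfl
        obtain ⟨hxM, hxc⟩ := hMf v hv
        have hxa : f v ∈ Child G (e.conf a) v := by
          rw [Child_const hT hN2 hN23 hR7 (by omega)]; exact hxc
        have hxb : f v ∈ Child G (e.conf b) v := by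
          rw [Child_const hT hN2 hN23 hR7 (by omega)]; exact hxc
        obtain ⟨-, -, hNP, -⟩ := (step_some hca).1
        obtain ⟨p', hp', hQa, -, hphne⟩ := hNP
        obtain rfl : p' = p := Option.some.inj ((hp').symm.trans (hPp a (by omega)))
        have hexec : (e.conf (a+1) v).ph = (e.conf a p').ph := by
          rw [(step_some hca).2]
          simp [execRule, parentPh, hp']
        have hQb : QuietSubTree G (e.conf b) v := by
          rcases (step_some hcb).1.2.2.2 with hEFP | hEP
          · exact absurd (hSb.symm.trans hEFP.1) (by decide)
          · exact hEP.2
        have hxne : (e.conf b (f v)).ph ≠ (e.conf a (f v)).ph := by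
          rw [(hQa (f v) hxa).2, (hQb (f v) hxb).2, hconst, hexec]
          exact Ne.symm hphne
        obtain ⟨s, hsa, hsb, hsc⟩ :=
          seq_change (g := fun j => (e.conf j (f v)).ph) (le_of_lt hab) hxne
        have hacts : e.act s (f v) = some Rule.R4 :=
          ph_change_era hT hN2 hN23 hR7 (hnr _ hxM) (hMinf _ hxM) (by omega) hsc
        have hSxs : (e.conf (s+1) (f v)).S = Working := by
          rw [(step_some hacts).2]; rfl
        have hSxb : (e.conf b (f v)).S = Idle := (hQb (f v) hxb).1
        have hsb' : s+1 < b := by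
          rcases Nat.lt_or_ge (s+1) b with h | h
          · exact h
          · exfalso
            have : s+1 = b := by omega
            rw [this] at hSxs
            exact Status.noConfusion (hSxs.symm.trans hSxb)
        have hSne : (e.conf b (f v)).S ≠ (e.conf (s+1) (f v)).S := by
          rw [hSxb, hSxs]; decide
        obtain ⟨s', hs'a, hs'b, hs'c⟩ :=
          seq_change (g := fun j => (e.conf j (f v)).S) (le_of_lt hsb') hSne
        refine ⟨f v, s, s', hxM, hsa, by omega, by omega, by rw [hacts]; simp, ?_⟩
        obtain ⟨ρ', hρ'⟩ := act_of_change (i := s') (u := f v) (fun hcs => hs'c (by rw [hcs]))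
        rw [hρ']; simp
      · -- R6 at a, so R4 at b; the parent p must act twice in between
        have hSb : (e.conf b v).S = Idle := by
          rw [hconst, (step_some hca).2]; rfl
        obtain rfl : ρb = Rule.R4 := by
          rcases hacttype v b ρb hv (by omega) hcb with rfl | rfl
          · rfl
          · exact absurd (hSb.symm.trans (htype6 v b hv (by omega) hcb)) (by decide)
        have hSa : (e.conf a v).S = Working := htype6 v a hv ha hca
        have hOk := (step_some hca).1.2.1
        have hnF : ¬ Faulty G r (e.conf a) v := hOk.2.2.2.1
        have hpstat := hstat p hpM a ha
        have hpErr : ¬ Erroneous (e.conf a p).S := by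
          rcases hpstat with hs | hs <;> rw [Erroneous, hs] <;>
            exact fun hc => by rcases hc with h | h <;> exact Status.noConfusion h
        have hSpa : (e.conf a p).S = Working := by
          by_contra hcon
          exact hnF ⟨hnr v hv, p, hPp a (by omega), hpErr, Or.inr (Or.inr (Or.inl
            ⟨hcon, by rw [hSa]; exact fun h => Status.noConfusion h⟩))⟩
        have hpha : (e.conf a v).ph = (e.conf a p).ph := by
          by_contra hcon
          exact hnF ⟨hnr v hv, p, hPp a (by omega), hpErr, Or.inr (Or.inr (Or.inr (Or.inl
            ⟨by rw [hSpa, hSa], hcon⟩)))⟩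
        obtain ⟨-, -, hNP, -⟩ := (step_some hcb).1
        obtain ⟨p', hp', -, -, hphne⟩ := hNP
        obtain rfl : p' = p := Option.some.inj ((hp').symm.trans (hPp b (by omega)))
        have hphb : (e.conf b v).ph = (e.conf a v).ph := by
          rw [hconst, (step_some hca).2]; rfl
        have hpne : (e.conf b p').ph ≠ (e.conf a p').ph := by
          intro hcon
          exact hphne (hphb.trans (hpha.trans hcon.symm))
        obtain ⟨s, hsa, hsb, hsc⟩ :=
          seq_change (g := fun j => (e.conf j p').ph) (le_of_lt hab) hpne
        have hacts : e.act s p' = some Rule.R4 :=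
          ph_change_era hT hN2 hN23 hR7 (hnr p' hpM) (hMinf p' hpM) (by omega) hsc
        have hSps : (e.conf s p').S = Idle := htype4 p' s hacts
        have halt : a < s := by
          rcases Nat.lt_or_ge a s with h | h
          · exact h
          · exfalso
            have : a = s := by omega
            rw [← this] at hSps
            exact Status.noConfusion (hSpa.symm.trans hSps)
        have hSpne : (e.conf s p').S ≠ (e.conf a p').S := by
          rw [hSps, hSpa]; decide
        obtain ⟨s'', hs''a, hs''b, hs''c⟩ :=
          seq_change (g := fun j => (e.conf j p').S) (le_of_lt halt) hSpne
        refine ⟨p', s'', s, hpM, by omega, by omega, by omega, ?_, by rw [hacts]; simp⟩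
        obtain ⟨ρ', hρ'⟩ := act_of_change (i := s'') (u := p') (fun hcs => hs''c (by rw [hcs]))
        rw [hρ']; simp
  -- infinite descent
  have no_two : ∀ (d : ℕ) (v : V) (a b : ℕ), M v → N4 ≤ a → a < b → b ≤ a + d →
      e.act a v ≠ none → e.act b v ≠ none → False := by
    intro d
    induction d using Nat.strong_induction_on with
    | _ d ih =>
      intro v a b hv ha hab hbd hacta hactb
      have hex : ∃ t, a < t ∧ e.act t v ≠ none := ⟨b, hab, hactb⟩
      have hspec := Nat.find_spec hex
      have hble : Nat.find hex ≤ b := Nat.find_le ⟨hab, hactb⟩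
      have hmid : ∀ t, a < t → t < Nat.find hex → e.act t v = none := by
        intro t h1 h2
        by_contra hcon
        exact Nat.find_min hex h2 ⟨h1, hcon⟩
      obtain ⟨x, s, s', hxM, hs1, hs2, hs3, hs4, hs5⟩ :=
        two_acts v a (Nat.find hex) hv ha hspec.1 hacta hspec.2 hmid
      exact ih (s' - s) (by omega) x s s' hxM (by omega) hs2 (by omega) hs4 hs5
  obtain ⟨v, hv⟩ := hne
  obtain ⟨a, haa, hacta⟩ := hMinf v hv N4
  obtain ⟨b, hba, hactb, -⟩ := first_act (hMinf v hv) a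
  exact no_two (b - a) v a b hv haa hba (by omega) hacta hactb

end Era


end Stmt13Aux



/-- in every regular execution, every process changes its color
infinitely often. -/
theorem stmt13 {V : Type} [Fintype V] [DecidableEq V]
    (G : SimpleGraph V) (r : V) (hconn : G.Connected)
    (e : Execution G r) (hreg : RegularExec G r e) :
    ∀ u, ∀ k, ∃ i, k ≤ i ∧ (e.conf (i + 1) u).C ≠ (e.conf i u).C := by
  classical
  intro u k
  by_contra hgoal
  push_neg at hgoal
  have hT : ∀ i w ρ, e.act i w = some ρ → TreeRule ρ := hreg.2
  obtain ⟨N2, hN2⟩ := exists_N2 hT hconn ⟨k, hgoal⟩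
  obtain ⟨N3, hN23, hR7⟩ := exists_N3 hT hN2
  obtain ⟨u1, hu1⟩ := exists_inf_actor e
  have hCinf : ∀ v, (∀ m, ∃ i, m ≤ i ∧ e.act i v ≠ none) →
      ∃ x, x ∈ Child G (e.conf N3) v ∧ ∀ m, ∃ i, m ≤ i ∧ e.act i x ≠ none := by
    intro v hv
    obtain ⟨x, hx⟩ := Set.nonempty_iff_ne_empty.mpr (child_nonempty hT hN2 hN23 hR7 hv)
    exact ⟨x, hx, child_inf hT hN2 hN23 hR7 hv hx⟩
  have hfex : ∀ v : V, ∃ x : V, (∀ m, ∃ i, m ≤ i ∧ e.act i v ≠ none) →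
      (x ∈ Child G (e.conf N3) v ∧ ∀ m, ∃ i, m ≤ i ∧ e.act i x ≠ none) := by
    intro v
    by_cases hv : ∀ m, ∃ i, m ≤ i ∧ e.act i v ≠ none
    · exact ⟨(hCinf v hv).choose, fun _ => (hCinf v hv).choose_spec⟩
    · exact ⟨v, fun hc => absurd hc hv⟩
  choose f hf using hfex
  have hiter : ∀ n, ∀ m, ∃ i, m ≤ i ∧ e.act i (f^[n] u1) ≠ none := by
    intro n
    induction n with
    | zero => exact hu1
    | succ n ih =>
      rw [Function.iterate_succ_apply']
      exact (hf _ ih).2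
  have key : ∀ a b : ℕ, a < b → f^[a] u1 = f^[b] u1 → False := by
    intro a b hab heq
    set x0 := f^[a] u1 with hx0
    have hcyc : f^[b - a] x0 = x0 := by
      rw [hx0, ← Function.iterate_add_apply]
      have hba : b - a + a = b := by omega
      rw [hba]
      exact heq.symm
    set M : V → Prop := fun v => ∃ n, f^[n] x0 = v with hMdef
    have hMx0 : M x0 := ⟨0, rfl⟩
    have hMinf : ∀ v, M v → ∀ m, ∃ i, m ≤ i ∧ e.act i v ≠ none := by
      intro v hv
      obtain ⟨n, hn⟩ := hv
      rw [← hn, hx0, ← Function.iterate_add_apply]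
      exact hiter (n + a)
    have hMf : ∀ v, M v → M (f v) ∧ f v ∈ Child G (e.conf N3) v := by
      intro v hv
      obtain ⟨n, hn⟩ := hv
      exact ⟨⟨n+1, by rw [Function.iterate_succ_apply', hn]⟩, (hf v (hMinf v ⟨n, hn⟩)).1⟩
    have hMsurj : ∀ v, M v → ∃ w, M w ∧ f w = v := by
      intro v hv
      obtain ⟨n, hn⟩ := hv
      cases n with
      | zero =>
        have hba1 : b - a - 1 + 1 = b - a := by omega
        have h2 : f^[b - a] x0 = f (f^[b - a - 1] x0) := by
          rw [← hba1]
          exact Function.iterate_succ_apply' f _ x0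
        refine ⟨f^[b - a - 1] x0, ⟨b - a - 1, rfl⟩, ?_⟩
        rw [← h2, hcyc]
        simpa using hn
      | succ m =>
        exact ⟨f^[m] x0, ⟨m, rfl⟩, by rw [← Function.iterate_succ_apply' f m x0]; exact hn⟩
    exact endgame hT hN2 hN23 hR7 f M ⟨x0, hMx0⟩ hMinf hMf hMsurj
  obtain ⟨n1, n2, hne12, heq⟩ := Fintype.exists_ne_map_eq_of_card_lt
    (fun n : Fin (Fintype.card V + 1) => f^[n.val] u1)
    (by rw [Fintype.card_fin]; omega)
  have hvalne : n1.val ≠ n2.val := fun hc => hne12 (Fin.val_injective hc)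
  rcases Nat.lt_or_ge n1.val n2.val with h | h
  · exact key n1.val n2.val h heq
  · exact key n2.val n1.val (by omega) heq.symm

end BFS
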